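/- Let R₀ > 1 and let h : [0,1] → ℝ be continuous, nonincreasing, with 0 < h(y) ≤ 1 for all y ∈ [0,1] and h(0) = 1. Then there exists a unique ȳ ∈ (0,1) such that R₀·h(ȳ)·(1 − ȳ) = 1. Moreover ȳ ≤ 1 − 1/R₀, with strict inequality whenever h(ȳ) < 1. -/
import Mathlib


/-- For R₀ > 1 and a continuous nonincreasing behavioral response
function h on [0,1] with 0 < h ≤ 1 and h(0) = 1, there is a unique endemic
equilibrium ȳ ∈ (0,1) with R₀·h(ȳ)·(1−ȳ) = 1; moreover ȳ ≤ 1 − 1/R₀, with strict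
inequality whenever h(ȳ) < 1. -/
theorem stmt9 (R₀ : ℝ) (hR : 1 < R₀) (h : ℝ → ℝ)
    (hcont : ContinuousOn h (Set.Icc 0 1))
    (hmono : AntitoneOn h (Set.Icc 0 1))
    (hpos : ∀ y ∈ Set.Icc (0 : ℝ) 1, 0 < h y ∧ h y ≤ 1)
    (h0 : h 0 = 1) :
    ∃ ybar ∈ Set.Ioo (0 : ℝ) 1,
      R₀ * h ybar * (1 - ybar) = 1 ∧
      (∀ z ∈ Set.Ioo (0 : ℝ) 1, R₀ * h z * (1 - z) = 1 → z = ybar) ∧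
      ybar ≤ 1 - 1 / R₀ ∧
      (h ybar < 1 → ybar < 1 - 1 / R₀) := by
  set f : ℝ → ℝ := fun y => R₀ * h y * (1 - y) with hf
  have hfc : ContinuousOn f (Set.Icc 0 1) := by
    apply ContinuousOn.mul
    · exact continuousOn_const.mul hcont
    · exact (continuousOn_const.sub continuousOn_id)
  have hf0 : f 0 = R₀ := by simp [hf, h0]
  have hf1 : f 1 = 0 := by simp [hf]
  -- strict antitonicity of f on Icc 0 1 restricted to y < 1
  have hstrict : ∀ a ∈ Set.Icc (0:ℝ) 1, ∀ b ∈ Set.Icc (0:ℝ) 1, a < b → b < 1 → f b < f a := by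
    intro a ha b hb hab hb1
    have hha := hpos a ha
    have hhb := hpos b hb
    have hmab := hmono ha hb hab.le
    have : R₀ * h b ≤ R₀ * h a := by nlinarith [hha.1, hhb.1]
    have hRb : 0 < R₀ * h b := by nlinarith [hhb.1]
    calc f b = (R₀ * h b) * (1 - b) := rfl
      _ < (R₀ * h b) * (1 - a) := by nlinarith
      _ ≤ (R₀ * h a) * (1 - a) := by nlinarith
  -- IVT
  have h1mem : (1:ℝ) ∈ Set.Icc (f 1) (f 0) := by
    rw [hf0, hf1]; exact ⟨zero_le_one, hR.le⟩
  obtain ⟨ybar, hymem, hyeq⟩ := intermediate_value_Icc' (zero_le_one) hfc h1mem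
  have hy0 : ybar ≠ 0 := by
    intro he; rw [he, hf0] at hyeq; linarith
  have hy1 : ybar ≠ 1 := by
    intro he; rw [he, hf1] at hyeq; linarith
  have hyIoo : ybar ∈ Set.Ioo (0:ℝ) 1 :=
    ⟨lt_of_le_of_ne hymem.1 (Ne.symm hy0), lt_of_le_of_ne hymem.2 hy1⟩
  refine ⟨ybar, hyIoo, hyeq, ?_, ?_, ?_⟩
  · intro z hz hzeq
    have hz' : f z = 1 := hzeq
    rcases lt_trichotomy z ybar with hlt | heq | hgt
    · have := hstrict z ⟨hz.1.le, hz.2.le⟩ ybar hymem hlt hyIoo.2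
      rw [hyeq, hz'] at this; linarith
    · exact heq
    · have := hstrict ybar hymem z ⟨hz.1.le, hz.2.le⟩ hgt hz.2
      rw [hyeq, hz'] at this; linarith
  · have hh := hpos ybar hymem
    have hyeq' : R₀ * h ybar * (1 - ybar) = 1 := hyeq
    have hR0 : (0:ℝ) < R₀ := by linarith
    have key : 1 ≤ R₀ * (1 - ybar) := by
      nlinarith [hh.1, hh.2, hyIoo.2]
    have : 1 / R₀ ≤ 1 - ybar := by rw [div_le_iff₀ hR0]; linarith
    linarith
  · intro hlt
    have hh := hpos ybar hymem
    have hyeq' : R₀ * h ybar * (1 - ybar) = 1 := hyeq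
    have hR0 : (0:ℝ) < R₀ := by linarith
    have key : 1 < R₀ * (1 - ybar) := by
      nlinarith [hh.1, hyIoo.2]
    have : 1 / R₀ < 1 - ybar := by rw [div_lt_iff₀ hR0]; linarith
    linarith
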